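/- (Small-divisor estimate.) Let d ≥ 1, τ > 0, γ > 0, 0 < δ < ξ ≤ 1, and let ω ∈ ℝ^d satisfy |⟨ω, n⟩| ≥ γ/|n|₁^τ for all nonzero n ∈ ℤ^d. Let M ≥ 0 and let u_n ∈ ℂ, for n ∈ ℤ^d \ {0}, satisfy |u_n| ≤ M e^{−|n|₁ ξ}. Then the series (D_ω^{−1} u)(x) := Σ_{n ≠ 0} (u_n/(i⟨ω, n⟩)) e^{i⟨n, x⟩} converges absolutely for every x ∈ ℂ^d with |Im x_j| ≤ ξ − δ, and there is a constant c > 0 depending only on d and τ such that for all such x: |(D_ω^{−1} u)(x)| ≤ c δ^{−(τ + d)} γ^{−1} M. -/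

import Mathlib

set_option maxHeartbeats 1600000

/-- Standard inner product on `Fin d → ℝ`. -/
def dotR {d : ℕ} (v w : Fin d → ℝ) : ℝ := ∑ i, v i * w i

/-- 1-norm of an integer vector, as a real number. -/
def oneNorm {d : ℕ} (n : Fin d → ℤ) : ℝ := ∑ i, |(n i : ℝ)|

lemma geomZ' {r : ℝ} (h0 : 0 ≤ r) (h1 : r < 1) :
    Summable (fun m : ℤ => r ^ m.natAbs) ∧ ∑' m : ℤ, r ^ m.natAbs ≤ 2 / (1 - r) := by
  have hgs : Summable (fun n : ℕ => r ^ n) := summable_geometric_of_lt_one h0 h1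
  have h₁ : (fun n : ℕ => r ^ ((n : ℤ)).natAbs) = fun n : ℕ => r ^ n := by
    funext n; simp
  have h₂ : (fun n : ℕ => r ^ ((-(n + 1) : ℤ)).natAbs) = fun n : ℕ => r * r ^ n := by
    funext n
    have : ((-(n + 1) : ℤ)).natAbs = n + 1 := by omega
    rw [this]; ring
  have hs₁ : Summable (fun n : ℕ => r ^ ((n : ℤ)).natAbs) := by rw [h₁]; exact hgs
  have hs₂ : Summable (fun n : ℕ => r ^ ((-(n + 1) : ℤ)).natAbs) := by
    rw [h₂]; exact hgs.mul_left r
  have hsum : Summable (fun m : ℤ => r ^ m.natAbs) :=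
    Summable.of_nat_of_neg_add_one hs₁ hs₂
  refine ⟨hsum, ?_⟩
  have heq := tsum_of_nat_of_neg_add_one (f := fun m : ℤ => r ^ m.natAbs) hs₁ hs₂
  rw [heq, h₁, h₂, tsum_geometric_of_lt_one h0 h1, tsum_mul_left,
    tsum_geometric_of_lt_one h0 h1]
  have hr : 0 < 1 - r := by linarith
  rw [div_eq_mul_inv]
  have h3 : (1-r)⁻¹ + r * (1-r)⁻¹ = (1 + r) * (1-r)⁻¹ := by ring
  rw [h3]
  have : (1:ℝ) + r ≤ 2 := by linarith
  calc (1 + r) * (1-r)⁻¹ ≤ 2 * (1-r)⁻¹ := by gcongr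

lemma pairHelp' (d : ℕ) (w : ℤ → ℝ) (hw : ∀ m, 0 ≤ w m) (hs : Summable w)
    (ihs : Summable (fun n : Fin d → ℤ => ∏ i, w (n i)))
    (hprodnn : ∀ n : Fin d → ℤ, 0 ≤ ∏ i, w (n i)) :
    Summable (fun p : ℤ × (Fin d → ℤ) => w p.1 * ∏ i, w (p.2 i)) ∧
    (∑' m, w m) * (∑' n : Fin d → ℤ, ∏ i, w (n i)) =
      ∑' p : ℤ × (Fin d → ℤ), w p.1 * ∏ i, w (p.2 i) := by
  have hn1 : Summable fun m : ℤ => ‖w m‖ := by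
    have h : (fun m : ℤ => ‖w m‖) = w := by
      funext m; exact Real.norm_of_nonneg (hw m)
    rw [h]; exact hs
  have hn2 : Summable fun n : Fin d → ℤ => ‖∏ i, w (n i)‖ := by
    have h : (fun n : Fin d → ℤ => ‖∏ i, w (n i)‖) = fun n => ∏ i, w (n i) := by
      funext n; exact Real.norm_of_nonneg (hprodnn n)
    rw [h]; exact ihs
  have h1 := summable_mul_of_summable_norm (f := w)
    (g := fun n : Fin d → ℤ => ∏ i, w (n i)) hn1 hn2
  have h2 := tsum_mul_tsum_of_summable_norm (f := w)
    (g := fun n : Fin d → ℤ => ∏ i, w (n i)) hn1 hn2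
  exact ⟨h1, h2⟩

lemma piSum' (d : ℕ) (w : ℤ → ℝ) (hw : ∀ m, 0 ≤ w m) (hs : Summable w) {C : ℝ}
    (hC : ∑' m, w m ≤ C) :
    Summable (fun n : Fin d → ℤ => ∏ i, w (n i)) ∧
      ∑' n : Fin d → ℤ, ∏ i, w (n i) ≤ C ^ d := by
  induction d with
  | zero =>
    constructor
    · exact Summable.of_finite
    · rw [tsum_eq_single (0 : Fin 0 → ℤ) (by intro b hb; exact absurd (Subsingleton.elim b 0) hb)]
      simp
  | succ d ih =>
    obtain ⟨ihs, iht⟩ := ih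
    have hCnn : 0 ≤ C := le_trans (tsum_nonneg fun m => hw m) hC
    have hprodnn : ∀ n : Fin d → ℤ, 0 ≤ ∏ i, w (n i) := fun n =>
      Finset.prod_nonneg fun i _ => hw (n i)
    obtain ⟨hps, hpt⟩ := pairHelp' d w hw hs ihs hprodnn
    set e : (ℤ × (Fin d → ℤ)) ≃ (Fin (d + 1) → ℤ) := Fin.consEquiv fun _ => ℤ with he
    have hcomp : (fun n : Fin (d+1) → ℤ => ∏ i, w (n i)) ∘ e =
        fun p : ℤ × (Fin d → ℤ) => w p.1 * ∏ i, w (p.2 i) := by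
      funext p
      rcases p with ⟨m, n⟩
      simp [he, Fin.consEquiv, Fin.prod_univ_succ]
    have hsum : Summable (fun n : Fin (d+1) → ℤ => ∏ i, w (n i)) := by
      rw [← e.summable_iff, hcomp]; exact hps
    refine ⟨hsum, ?_⟩
    have heq : ∑' n : Fin (d+1) → ℤ, ∏ i, w (n i) =
        ∑' p : ℤ × (Fin d → ℤ), w p.1 * ∏ i, w (p.2 i) := by
      rw [← e.tsum_eq]
      exact tsum_congr fun p => congrFun hcomp p
    rw [heq, ← hpt, pow_succ]
    have ht2 : 0 ≤ ∑' n : Fin d → ℤ, ∏ i, w (n i) := tsum_nonneg hprodnn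
    calc (∑' m, w m) * (∑' n : Fin d → ℤ, ∏ i, w (n i)) ≤ C * C ^ d :=
          mul_le_mul hC iht ht2 hCnn
      _ = C ^ d * C := by ring

lemma supLem (τ : ℝ) (hτ : 0 < τ) {s : ℝ} (hs : 0 ≤ s) :
    s ^ τ * Real.exp (-s) ≤ (Nat.factorial ⌈τ⌉₊ : ℝ) + 1 := by
  set m := ⌈τ⌉₊
  have hfact : (1:ℝ) ≤ (Nat.factorial m : ℝ) := by
    exact_mod_cast Nat.one_le_iff_ne_zero.mpr (Nat.factorial_ne_zero m)
  rcases le_or_gt s 1 with h1 | h1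
  · have hr : s ^ τ ≤ 1 := Real.rpow_le_one hs h1 hτ.le
    have he : Real.exp (-s) ≤ 1 := Real.exp_le_one_iff.mpr (by linarith)
    nlinarith [Real.exp_pos (-s), Real.rpow_nonneg hs τ]
  · have hr : s ^ τ ≤ s ^ (m : ℝ) :=
      Real.rpow_le_rpow_of_exponent_le h1.le (Nat.le_ceil τ)
    have hrm : s ^ (m : ℝ) = s ^ m := Real.rpow_natCast s m
    have hsm : s ^ m ≤ (Nat.factorial m : ℝ) * Real.exp s := by
      have hterm : s ^ m / (Nat.factorial m : ℝ) ≤ Real.exp s := by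
        refine le_trans ?_ (Real.sum_le_exp_of_nonneg (by linarith) (m + 1))
        refine Finset.single_le_sum (f := fun i => s ^ i / (Nat.factorial i : ℝ)) ?_ ?_
        · intro i _
          positivity
        · simp
      rw [div_le_iff₀ (by positivity)] at hterm
      linarith [hterm]
    have hexp : 0 < Real.exp (-s) := Real.exp_pos _
    have : s ^ τ * Real.exp (-s) ≤ (Nat.factorial m : ℝ) * Real.exp s * Real.exp (-s) := by
      have h2 : s ^ τ ≤ (Nat.factorial m : ℝ) * Real.exp s := by
        rw [hrm] at hr; linarith
      exact mul_le_mul_of_nonneg_right h2 hexp.le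
    have h0 : s + -s = 0 := by ring
    rw [mul_assoc, ← Real.exp_add, h0, Real.exp_zero, mul_one] at this
    linarith

lemma oneNorm_pos {d : ℕ} {n : Fin d → ℤ} (hn : n ≠ 0) : 1 ≤ oneNorm n := by
  obtain ⟨j, hj⟩ := Function.ne_iff.mp hn
  have h1 : (1:ℝ) ≤ |(n j : ℝ)| := by
    have : (1:ℤ) ≤ |n j| := Int.one_le_abs (by simpa using hj)
    calc (1:ℝ) ≤ (|n j| : ℤ) := by exact_mod_cast this
      _ = |(n j : ℝ)| := by push_cast; rfl
  calc (1:ℝ) ≤ |(n j : ℝ)| := h1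
    _ ≤ ∑ i, |(n i : ℝ)| :=
        Finset.single_le_sum (f := fun i => |(n i : ℝ)|)
          (fun i _ => abs_nonneg _) (Finset.mem_univ j)

/-- Small-divisor estimate: if `ω` is Diophantine (`|⟨ω,n⟩| ≥ γ/|n|₁^τ`) and
`|u_n| ≤ M e^(−|n|₁ξ)`, then the series `(D_ω⁻¹u)(x) = Σ_{n≠0} u_n/(i⟨ω,n⟩) e^(i⟨n,x⟩)`
converges absolutely for `|Im x_j| ≤ ξ − δ` and is bounded there by `c δ^(−(τ+d)) γ⁻¹ M`,
with `c = c(d,τ)`. -/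
theorem small_divisor_series_estimate (d : ℕ) (hd : 1 ≤ d) (τ : ℝ) (hτ : 0 < τ) :
    ∃ c : ℝ, 0 < c ∧
      ∀ (γ ξ δ : ℝ), 0 < γ → 0 < δ → δ < ξ → ξ ≤ 1 →
      ∀ ω : Fin d → ℝ,
        (∀ n : Fin d → ℤ, n ≠ 0 → γ / oneNorm n ^ τ ≤ |dotR ω (fun i => (n i : ℝ))|) →
      ∀ (M : ℝ), 0 ≤ M →
      ∀ u : (Fin d → ℤ) → ℂ,
        (∀ n : Fin d → ℤ, n ≠ 0 → ‖u n‖ ≤ M * Real.exp (-(oneNorm n * ξ))) →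
      ∀ x : Fin d → ℂ, (∀ j, |(x j).im| ≤ ξ - δ) →
        Summable (fun n : {n : Fin d → ℤ // n ≠ 0} =>
          ‖u n.1 / (Complex.I * (dotR ω fun i => (n.1 i : ℝ))) *
            Complex.exp (Complex.I * ∑ i, (n.1 i : ℂ) * x i)‖) ∧
        ‖∑' n : {n : Fin d → ℤ // n ≠ 0},
            u n.1 / (Complex.I * (dotR ω fun i => (n.1 i : ℝ))) *
              Complex.exp (Complex.I * ∑ i, (n.1 i : ℂ) * x i)‖ ≤
          c * δ ^ (-(τ + (d : ℝ))) * γ⁻¹ * M := by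
  classical
  set K : ℝ := ((Nat.factorial ⌈τ⌉₊ : ℝ) + 1) * (2:ℝ) ^ τ with hK
  have hKpos : 0 < K := by
    have : (0:ℝ) < (2:ℝ) ^ τ := Real.rpow_pos_of_pos (by norm_num) τ
    have hfact : (0:ℝ) < (Nat.factorial ⌈τ⌉₊ : ℝ) + 1 := by positivity
    exact mul_pos hfact this
  refine ⟨K * 8 ^ d, by positivity, ?_⟩
  intro γ ξ δ hγ hδ hδξ hξ ω hω M hM u hu x hx
  set a : ℝ := δ / 2 with haa
  have ha : 0 < a := by positivity
  have ha1 : a ≤ 1 := by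
    have : δ ≤ 1 := le_of_lt (lt_of_lt_of_le hδξ hξ)
    simp only [haa]; linarith
  set r : ℝ := Real.exp (-a) with hr
  have h0r : 0 ≤ r := (Real.exp_pos _).le
  have h1r : r < 1 := Real.exp_lt_one_iff.mpr (by linarith)
  -- the weight function
  set w : ℤ → ℝ := fun m => Real.exp (-(|(m : ℝ)| * a)) with hwdef
  have hw : ∀ m, 0 ≤ w m := fun m => (Real.exp_pos _).le
  have hwr : w = fun m : ℤ => r ^ m.natAbs := by
    funext m
    have habs : |(m : ℝ)| = (m.natAbs : ℝ) := by
      rw [Nat.cast_natAbs, Int.cast_abs]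
    rw [hwdef, hr]
    simp only [habs, ← Real.exp_nat_mul]
    ring_nf
  obtain ⟨hwsum0, hwt0⟩ := geomZ' h0r h1r
  have hwsum : Summable w := by rw [hwr]; exact hwsum0
  have hwt : ∑' m, w m ≤ 8 / δ := by
    have h2 : a / 2 ≤ 1 - r := by
      have hinv : r ≤ (1 + a)⁻¹ := by
        rw [hr, Real.exp_neg]
        exact inv_anti₀ (by linarith) (by linarith [Real.add_one_le_exp a])
      have h1a : (1 + a)⁻¹ ≤ 1 - a / 2 := by
        rw [inv_le_iff_one_le_mul₀ (by linarith)]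
        nlinarith
      linarith
    have hub : 2 / (1 - r) ≤ 8 / δ := by
      have h1rpos : 0 < 1 - r := by linarith
      rw [div_le_div_iff₀ h1rpos hδ]
      have : a = δ / 2 := haa
      nlinarith
    calc ∑' m, w m = ∑' m : ℤ, r ^ m.natAbs := by rw [hwr]
      _ ≤ 2 / (1 - r) := hwt0
      _ ≤ 8 / δ := hub
  have h8δ : (0:ℝ) ≤ 8 / δ := by positivity
  obtain ⟨hbsum, hbt⟩ := piSum' d w hw hwsum hwt
  set b : (Fin d → ℤ) → ℝ := fun n => ∏ i, w (n i) with hbdef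
  have hbnn : ∀ n, 0 ≤ b n := fun n => Finset.prod_nonneg fun i _ => hw (n i)
  -- b n = exp (-(oneNorm n * a))
  have hbexp : ∀ n : Fin d → ℤ, b n = Real.exp (-(oneNorm n * a)) := by
    intro n
    rw [hbdef]
    simp only [hwdef]
    rw [← Real.exp_sum]
    congr 1
    rw [oneNorm, Finset.sum_mul, ← Finset.sum_neg_distrib]
  -- the term functions
  set T : {n : Fin d → ℤ // n ≠ 0} → ℂ := fun n =>
    u n.1 / (Complex.I * (dotR ω fun i => (n.1 i : ℝ))) *
      Complex.exp (Complex.I * ∑ i, (n.1 i : ℂ) * x i) with hT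
  set const : ℝ := M * γ⁻¹ * (((Nat.factorial ⌈τ⌉₊ : ℝ) + 1) * a ^ (-τ)) with hconst
  have hconstnn : 0 ≤ const := by
    have : (0:ℝ) ≤ a ^ (-τ) := (Real.rpow_pos_of_pos ha _).le
    have h2 : (0:ℝ) ≤ (Nat.factorial ⌈τ⌉₊ : ℝ) + 1 := by positivity
    positivity
  -- pointwise bound
  have hpoint : ∀ n : {n : Fin d → ℤ // n ≠ 0},
      ‖T n‖ ≤ const * b n.1 := by
    rintro ⟨n, hn⟩
    set t : ℝ := oneNorm n with htd
    have ht1 : 1 ≤ t := oneNorm_pos hn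
    have htpos : 0 < t := by linarith
    have htτpos : 0 < t ^ τ := Real.rpow_pos_of_pos htpos τ
    have hdiopos : 0 < γ / t ^ τ := div_pos hγ htτpos
    have hdio := hω n hn
    have hdotpos : 0 < |dotR ω fun i => (n i : ℝ)| := lt_of_lt_of_le hdiopos hdio
    set D : ℝ := dotR ω fun i => (n i : ℝ) with hD
    -- modulus computation
    have himeq : (∑ i, (n i : ℂ) * x i).im = ∑ i, (n i : ℝ) * (x i).im := by
      rw [Complex.im_sum]
      refine Finset.sum_congr rfl fun i _ => ?_
      simp [Complex.mul_im]
    have hre : (Complex.I * ∑ i, (n i : ℂ) * x i).re = -(∑ i, (n i : ℝ) * (x i).im) := by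
      simp [Complex.mul_re]
    have habsT : ‖T ⟨n, hn⟩‖ =
        ‖u n‖ * |D|⁻¹ *
          Real.exp (-(∑ i, (n i : ℝ) * (x i).im)) := by
      rw [hT]
      simp only [norm_mul, norm_div, Complex.norm_exp, Complex.norm_I, Complex.norm_real,
        one_mul, hre, himeq, div_eq_mul_inv]
      simp [norm_mul, Complex.norm_I, Complex.norm_real, hD]
    -- bound each factor
    have hξδ : 0 ≤ ξ - δ := by linarith
    have hexpb : -(∑ i, (n i : ℝ) * (x i).im) ≤ t * (ξ - δ) := by
      have h1 : -(∑ i, (n i : ℝ) * (x i).im) ≤ |∑ i, (n i : ℝ) * (x i).im| :=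
        neg_le_abs _
      have h2 : |∑ i, (n i : ℝ) * (x i).im| ≤ ∑ i, |(n i : ℝ)| * (ξ - δ) := by
        refine le_trans (Finset.abs_sum_le_sum_abs _ _) ?_
        refine Finset.sum_le_sum fun i _ => ?_
        rw [abs_mul]
        exact mul_le_mul_of_nonneg_left (hx i) (abs_nonneg _)
      have h3 : ∑ i, |(n i : ℝ)| * (ξ - δ) = t * (ξ - δ) := by
        rw [htd, oneNorm, Finset.sum_mul]
      linarith
    have hDin : |D|⁻¹ ≤ t ^ τ * γ⁻¹ := by
      have h5 := inv_anti₀ hdiopos hdio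
      rw [inv_div] at h5
      calc |D|⁻¹ ≤ t ^ τ / γ := h5
        _ = t ^ τ * γ⁻¹ := div_eq_mul_inv _ _
    have hub : ‖T ⟨n, hn⟩‖ ≤
        (M * Real.exp (-(t * ξ))) * (t ^ τ * γ⁻¹) * Real.exp (t * (ξ - δ)) := by
      rw [habsT]
      have hA := hu n hn
      refine mul_le_mul ?_ (Real.exp_le_exp.mpr hexpb) (Real.exp_pos _).le ?_
      · exact mul_le_mul hA hDin (inv_nonneg.mpr (abs_nonneg _)) (by positivity)
      · have : (0:ℝ) ≤ t ^ τ * γ⁻¹ := by positivity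
        positivity
    -- simplify: exp(-(tξ)) * exp(t(ξ-δ)) = exp(-(tδ))
    have hexpc : Real.exp (-(t * ξ)) * Real.exp (t * (ξ - δ)) = Real.exp (-(t * δ)) := by
      rw [← Real.exp_add]; congr 1; ring
    have hcollect : (M * Real.exp (-(t * ξ))) * (t ^ τ * γ⁻¹) * Real.exp (t * (ξ - δ))
        = M * γ⁻¹ * (t ^ τ * Real.exp (-(t * δ))) := by
      rw [← hexpc]; ring
    rw [hcollect] at hub
    -- t^τ exp(-(tδ)) ≤ ((m!+1) a^(-τ)) * exp(-(t*a))
    have hkey : t ^ τ * Real.exp (-(t * δ)) ≤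
        ((Nat.factorial ⌈τ⌉₊ : ℝ) + 1) * a ^ (-τ) * Real.exp (-(t * a)) := by
      have hsplit : Real.exp (-(t * δ)) = Real.exp (-(t * a)) * Real.exp (-(t * a)) := by
        rw [← Real.exp_add]
        congr 1
        rw [haa]; ring
      rw [hsplit, ← mul_assoc]
      refine mul_le_mul_of_nonneg_right ?_ (Real.exp_pos _).le
      -- t^τ exp(-(t a)) ≤ (m!+1) a^{-τ}
      set s : ℝ := t * a with hsd
      have hs : 0 ≤ s := by positivity
      have hts : t = s * a⁻¹ := by
        rw [hsd]; field_simp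
      have htr : t ^ τ = s ^ τ * a ^ (-τ) := by
        rw [hts, Real.mul_rpow hs (inv_nonneg.mpr ha.le), Real.inv_rpow ha.le,
          ← Real.rpow_neg ha.le]
      rw [htr]
      have := supLem τ hτ hs
      calc s ^ τ * a ^ (-τ) * Real.exp (-s)
          = (s ^ τ * Real.exp (-s)) * a ^ (-τ) := by ring
        _ ≤ ((Nat.factorial ⌈τ⌉₊ : ℝ) + 1) * a ^ (-τ) := by
            exact mul_le_mul_of_nonneg_right this (Real.rpow_pos_of_pos ha _).le
    have hfinal : ‖T ⟨n, hn⟩‖ ≤ const * b n := by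
      rw [hconst, hbexp n]
      have hb' : Real.exp (-(t * a)) = Real.exp (-(oneNorm n * a)) := by rw [htd]
      calc ‖T ⟨n, hn⟩‖ ≤ M * γ⁻¹ * (t ^ τ * Real.exp (-(t * δ))) := hub
        _ ≤ M * γ⁻¹ * (((Nat.factorial ⌈τ⌉₊ : ℝ) + 1) * a ^ (-τ) * Real.exp (-(t * a))) := by
            refine mul_le_mul_of_nonneg_left hkey ?_
            positivity
        _ = M * γ⁻¹ * (((Nat.factorial ⌈τ⌉₊ : ℝ) + 1) * a ^ (-τ)) *
              Real.exp (-(oneNorm n * a)) := by rw [← hb']; ring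
    exact hfinal
  -- summability
  have hbsub : Summable (fun n : {n : Fin d → ℤ // n ≠ 0} => b n.1) :=
    hbsum.comp_injective Subtype.val_injective
  have hgsum : Summable (fun n : {n : Fin d → ℤ // n ≠ 0} => const * b n.1) :=
    hbsub.mul_left const
  have hAsum : Summable (fun n : {n : Fin d → ℤ // n ≠ 0} => ‖T n‖) :=
    Summable.of_nonneg_of_le (fun n => norm_nonneg _) hpoint hgsum
  refine ⟨hAsum, ?_⟩
  -- tsum bound
  have hTnorm : (fun n : {n : Fin d → ℤ // n ≠ 0} => ‖T n‖) =
      fun n => ‖T n‖ := by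
    funext n; rfl
  have hTsum : Summable T := by
    apply Summable.of_norm
    rw [hTnorm]; exact hAsum
  have h1 : ‖∑' n, T n‖ ≤ ∑' n, ‖T n‖ := by
    refine le_trans (norm_tsum_le_tsum_norm ?_) ?_
    · rw [hTnorm]; exact hAsum
    · rw [hTnorm]
  have h2 : ∑' n, ‖T n‖ ≤ const * ∑' n : {n : Fin d → ℤ // n ≠ 0}, b n.1 := by
    rw [← tsum_mul_left]
    exact Summable.tsum_le_tsum hpoint hAsum hgsum
  have h3 : ∑' n : {n : Fin d → ℤ // n ≠ 0}, b n.1 ≤ ∑' n : Fin d → ℤ, b n :=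
    tsum_comp_le_tsum_of_inj hbsum hbnn Subtype.val_injective
  have h4 : ∑' n : Fin d → ℤ, b n ≤ (8 / δ) ^ d := hbt
  have hchain : ‖∑' n, T n‖ ≤ const * (8 / δ) ^ d := by
    have hb0 : 0 ≤ ∑' n : {n : Fin d → ℤ // n ≠ 0}, b n.1 := tsum_nonneg fun n => hbnn n.1
    calc ‖∑' n, T n‖ ≤ ∑' n, ‖T n‖ := h1
      _ ≤ const * ∑' n : {n : Fin d → ℤ // n ≠ 0}, b n.1 := h2
      _ ≤ const * (8 / δ) ^ d := by
          exact mul_le_mul_of_nonneg_left (le_trans h3 h4) hconstnn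
  refine le_trans hchain (le_of_eq ?_)
  -- algebra: const * (8/δ)^d = K * 8^d * δ^(-(τ+d)) * γ⁻¹ * M
  rw [hconst, hK, haa]
  have hsplit : δ ^ (-(τ + (d:ℝ))) = δ ^ (-τ) * (δ ^ d)⁻¹ := by
    rw [show -(τ + (d:ℝ)) = -τ + -(d:ℝ) by ring, Real.rpow_add hδ, Real.rpow_neg hδ.le (d:ℝ),
      Real.rpow_natCast]
  have haτ : (δ / 2) ^ (-τ) = δ ^ (-τ) * (2:ℝ) ^ τ := by
    rw [Real.div_rpow hδ.le (by norm_num : (0:ℝ) ≤ 2), div_eq_mul_inv,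
      Real.rpow_neg (by norm_num : (0:ℝ) ≤ 2) τ, inv_inv]
  have h8 : ((8:ℝ) / δ) ^ d = 8 ^ d * (δ ^ d)⁻¹ := by
    rw [div_pow, div_eq_mul_inv]
  rw [hsplit, haτ, h8]
  ring
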